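/- For every n ≥ 0 and complex z, z': Σ_{λ ⊢ n} (z)_λ (z')_λ (dim λ)^2 / (n!)^2 = (zz')_n / n!, where (z)_λ = Π_{(i,j)∈λ}(z+j-i), dim λ is the number of standard Young tableaux of shape λ, and (zz')_n is the Pochhammer symbol of the product zz'. -/

import Mathlib

open scoped Classical

/-- A finite set of boxes `(row, column)` (0-indexed) is a Young diagram if it is a
lower set in the coordinatewise order. -/
def IsYD (s : Finset (ℕ × ℕ)) : Prop :=
  ∀ p ∈ s, ∀ q : ℕ × ℕ, q.1 ≤ p.1 → q.2 ≤ p.2 → q ∈ s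

/-- Young diagrams (= partitions). -/
def YD : Type := {s : Finset (ℕ × ℕ) // IsYD s}

/-- `skewDim n μ ν` counts the chains of diagrams from `ν` down to `μ` removing one
corner box at a time in `n` steps; for `n = |ν| - |μ|` this is the number `dim ν/μ`
of standard Young tableaux of skew shape `ν/μ`. -/
noncomputable def skewDim : ℕ → Finset (ℕ × ℕ) → Finset (ℕ × ℕ) → ℕ
  | 0, μ, ν => if μ = ν then 1 else 0
  | n + 1, μ, ν =>
      ∑ p ∈ ν.filter (fun p => IsYD (ν.erase p) ∧ μ ⊆ ν.erase p),
        skewDim n μ (ν.erase p)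

/-- `dim ν`, the number of standard Young tableaux of shape `ν`. -/
noncomputable def dimYD (s : Finset (ℕ × ℕ)) : ℕ := skewDim s.card ∅ s

/-- `(z)_s = ∏_{□ ∈ s} (z + c(□))` with `c(i,j) = j - i` the content. -/
noncomputable def contentPoch (z : ℂ) (s : Finset (ℕ × ℕ)) : ℂ :=
  ∏ p ∈ s, (z + (p.2 : ℂ) - (p.1 : ℂ))

def IsAdd (s : Finset (ℕ × ℕ)) (p : ℕ × ℕ) : Prop :=
  p ∉ s ∧ (p.1 = 0 ∨ (p.1 - 1, p.2) ∈ s) ∧ (p.2 = 0 ∨ (p.1, p.2 - 1) ∈ s)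

def IsRem (s : Finset (ℕ × ℕ)) (p : ℕ × ℕ) : Prop :=
  p ∈ s ∧ (p.1 + 1, p.2) ∉ s ∧ (p.1, p.2 + 1) ∉ s

lemma isYD_empty : IsYD ∅ := by intro p hp; simp at hp

lemma isAdd_iff {s : Finset (ℕ × ℕ)} (hs : IsYD s) (p : ℕ × ℕ) :
    IsAdd s p ↔ p ∉ s ∧ IsYD (insert p s) := by
  constructor
  · rintro ⟨hp, h1, h2⟩
    refine ⟨hp, ?_⟩
    intro q hq r hr1 hr2
    rcases Finset.mem_insert.1 hq with rfl | hq
    · by_cases hr : r = q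
      · simp [hr]
      · have : r.1 < q.1 ∨ r.2 < q.2 := by
          rcases Nat.lt_or_ge r.1 q.1 with h | h
          · exact Or.inl h
          · right
            rcases Nat.lt_or_ge r.2 q.2 with h' | h'
            · exact h'
            · exfalso; exact hr (Prod.ext (le_antisymm hr1 h) (le_antisymm hr2 h'))
        rcases this with h | h
        · rcases h1 with h1 | h1
          · omega
          · exact Finset.mem_insert_of_mem (hs _ h1 r (show r.1 ≤ q.1 - 1 by omega) hr2)
        · rcases h2 with h2 | h2
          · omega
          · exact Finset.mem_insert_of_mem (hs _ h2 r hr1 (show r.2 ≤ q.2 - 1 by omega))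
    · exact Finset.mem_insert_of_mem (hs _ hq r hr1 hr2)
  · rintro ⟨hp, h⟩
    refine ⟨hp, ?_, ?_⟩
    · rcases Nat.eq_zero_or_pos p.1 with h0 | h0
      · exact Or.inl h0
      · right
        have := h p (Finset.mem_insert_self _ _) (p.1 - 1, p.2) (show p.1 - 1 ≤ p.1 by omega) le_rfl
        rcases Finset.mem_insert.1 this with heq | hm
        · exfalso; have := congrArg Prod.fst heq; simp at this; omega
        · exact hm
    · rcases Nat.eq_zero_or_pos p.2 with h0 | h0
      · exact Or.inl h0
      · right
        have := h p (Finset.mem_insert_self _ _) (p.1, p.2 - 1) le_rfl (show p.2 - 1 ≤ p.2 by omega)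
        rcases Finset.mem_insert.1 this with heq | hm
        · exfalso; have := congrArg Prod.snd heq; simp at this; omega
        · exact hm

lemma isRem_iff {s : Finset (ℕ × ℕ)} (hs : IsYD s) (p : ℕ × ℕ) :
    IsRem s p ↔ p ∈ s ∧ IsYD (s.erase p) := by
  constructor
  · rintro ⟨hp, h1, h2⟩
    refine ⟨hp, ?_⟩
    intro q hq r hr1 hr2
    have hq' := Finset.mem_of_mem_erase hq
    have hqp := Finset.ne_of_mem_erase hq
    have hrs : r ∈ s := hs _ hq' r hr1 hr2
    refine Finset.mem_erase.2 ⟨?_, hrs⟩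
    rintro rfl
    have htri : (q.1 = r.1 ∧ q.2 = r.2) ∨ r.1 + 1 ≤ q.1 ∨ r.2 + 1 ≤ q.2 := by omega
    rcases htri with ⟨e1, e2⟩ | h | h
    · exact hqp (Prod.ext e1 e2)
    · exact h1 (hs _ hq' (r.1+1, r.2) h hr2)
    · exact h2 (hs _ hq' (r.1, r.2+1) hr1 h)
  · rintro ⟨hp, h⟩
    refine ⟨hp, ?_, ?_⟩
    · intro hm
      have : (p.1, p.2) ∈ s.erase p :=
        h _ (Finset.mem_erase.2 ⟨by simp [Prod.ext_iff], hm⟩) (p.1, p.2)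
          (show p.1 ≤ p.1 + 1 by omega) le_rfl
      simp at this
    · intro hm
      have : (p.1, p.2) ∈ s.erase p :=
        h _ (Finset.mem_erase.2 ⟨by simp [Prod.ext_iff], hm⟩) (p.1, p.2)
          le_rfl (show p.2 ≤ p.2 + 1 by omega)
      simp at this

lemma fst_lt_card {s : Finset (ℕ × ℕ)} (hs : IsYD s) {p : ℕ × ℕ} (hp : p ∈ s) :
    p.1 < s.card := by
  have hsub : (Finset.range (p.1 + 1)).image (fun i => (i, p.2)) ⊆ s := by
    intro q hq
    simp only [Finset.mem_image, Finset.mem_range] at hq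
    obtain ⟨i, hi, rfl⟩ := hq
    exact hs p hp _ (by simp; omega) le_rfl
  have h2 := Finset.card_le_card hsub
  have h3 : ((Finset.range (p.1 + 1)).image (fun i => (i, p.2))).card = p.1 + 1 := by
    rw [Finset.card_image_of_injective _ (fun a b h => by simpa using h), Finset.card_range]
  omega

lemma snd_lt_card {s : Finset (ℕ × ℕ)} (hs : IsYD s) {p : ℕ × ℕ} (hp : p ∈ s) :
    p.2 < s.card := by
  have hsub : (Finset.range (p.2 + 1)).image (fun j => (p.1, j)) ⊆ s := by
    intro q hq
    simp only [Finset.mem_image, Finset.mem_range] at hq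
    obtain ⟨j, hj, rfl⟩ := hq
    exact hs p hp _ le_rfl (by simp; omega)
  have h2 := Finset.card_le_card hsub
  have h3 : ((Finset.range (p.2 + 1)).image (fun j => (p.1, j))).card = p.2 + 1 := by
    rw [Finset.card_image_of_injective _ (fun a b h => by simpa using h), Finset.card_range]
  omega

/-- the addable boxes of a diagram -/
noncomputable def addSet (s : Finset (ℕ × ℕ)) : Finset (ℕ × ℕ) :=
  (Finset.range (s.card + 1) ×ˢ Finset.range (s.card + 1)).filter (fun p => IsAdd s p)

/-- the removable boxes of a diagram -/
noncomputable def remSet (s : Finset (ℕ × ℕ)) : Finset (ℕ × ℕ) :=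
  s.filter (fun p => IsRem s p)

lemma mem_remSet {s : Finset (ℕ × ℕ)} {p : ℕ × ℕ} :
    p ∈ remSet s ↔ IsRem s p := by
  unfold remSet
  rw [Finset.mem_filter]
  exact ⟨fun h => h.2, fun h => ⟨h.1, h⟩⟩

lemma mem_addSet {s : Finset (ℕ × ℕ)} (hs : IsYD s) {p : ℕ × ℕ} :
    p ∈ addSet s ↔ IsAdd s p := by
  unfold addSet
  rw [Finset.mem_filter]
  constructor
  · rintro ⟨_, h⟩; exact h
  · intro h
    refine ⟨?_, h⟩
    have h2 := (isAdd_iff hs p).1 h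
    have hins : IsYD (insert p s) := h2.2
    have hmem : p ∈ insert p s := Finset.mem_insert_self _ _
    have c1 := fst_lt_card hins hmem
    have c2 := snd_lt_card hins hmem
    have hc : (insert p s).card = s.card + 1 := Finset.card_insert_of_notMem h2.1
    simp only [Finset.mem_product, Finset.mem_range]
    omega

lemma isAdd_bound {s : Finset (ℕ × ℕ)} (hs : IsYD s) {p : ℕ × ℕ} (h : IsAdd s p) :
    p.1 < s.card + 1 ∧ p.2 < s.card + 1 := by
  have h2 := (isAdd_iff hs p).1 h
  have hins : IsYD (insert p s) := h2.2
  have hmem : p ∈ insert p s := Finset.mem_insert_self _ _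
  have c1 := fst_lt_card hins hmem
  have c2 := snd_lt_card hins hmem
  have hc : (insert p s).card = s.card + 1 := Finset.card_insert_of_notMem h2.1
  omega

lemma addSet_eq_filter {s : Finset (ℕ × ℕ)} (hs : IsYD s) {N : ℕ} (hN : s.card + 1 ≤ N) :
    addSet s = (Finset.range N ×ˢ Finset.range N).filter (fun p => IsAdd s p) := by
  ext p
  rw [mem_addSet hs, Finset.mem_filter, Finset.mem_product, Finset.mem_range, Finset.mem_range]
  constructor
  · intro h
    have := isAdd_bound hs h
    exact ⟨⟨by omega, by omega⟩, h⟩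
  · exact fun h => h.2

lemma remSet_eq_filter {s : Finset (ℕ × ℕ)} (hs : IsYD s) {N : ℕ} (hN : s.card ≤ N) :
    remSet s = (Finset.range N ×ˢ Finset.range N).filter (fun p => IsRem s p) := by
  ext p
  rw [mem_remSet, Finset.mem_filter, Finset.mem_product, Finset.mem_range, Finset.mem_range]
  constructor
  · intro h
    have c1 := fst_lt_card hs h.1
    have c2 := snd_lt_card hs h.1
    exact ⟨⟨by omega, by omega⟩, h⟩
  · exact fun h => h.2

lemma exists_isRem {s : Finset (ℕ × ℕ)} (hs : IsYD s) (hne : s.Nonempty) :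
    ∃ b, IsRem s b := by
  obtain ⟨b, hb, hmax⟩ := Finset.exists_max_image s (fun p => p.1 + p.2) hne
  refine ⟨b, hb, ?_, ?_⟩
  · intro h; have := hmax _ h; simp at this
  · intro h; have := hmax _ h; simp at this

/-- the weight `(z + c(p)) (z' + c(p))` -/
noncomputable def W (z z' : ℂ) (p : ℕ × ℕ) : ℂ :=
  (z + (p.2 : ℂ) - (p.1 : ℂ)) * (z' + (p.2 : ℂ) - (p.1 : ℂ))

noncomputable def Fd (z z' : ℂ) (ν : Finset (ℕ × ℕ)) (b p : ℕ × ℕ) : ℂ :=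
  (if IsAdd (insert b ν) p then W z z' p else 0)
  - (if IsRem (insert b ν) p then W z z' p else 0)
  - (if IsAdd ν p then W z z' p else 0)
  + (if IsRem ν p then W z z' p else 0)

section FdAux

variable (z z' : ℂ)

variable {ν : Finset (ℕ × ℕ)} {b : ℕ × ℕ} (hν : IsYD ν) (hb : IsAdd ν b)

namespace StepAux

lemma hnot (hν : IsYD ν) (hb : IsAdd ν b) :
    ∀ q : ℕ × ℕ, b.1 ≤ q.1 → b.2 ≤ q.2 → q ∉ ν :=
  fun q h1 h2 hq => hb.1 (hν q hq b h1 h2)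

include hν hb

lemma Fd_center : Fd z z' ν b b = -(2 * W z z' b) := by
  have h1 : ¬ IsAdd (insert b ν) b := fun h => h.1 (Finset.mem_insert_self _ _)
  have h2 : IsRem (insert b ν) b := by
    refine ⟨Finset.mem_insert_self _ _, ?_, ?_⟩
    · rw [Finset.mem_insert]
      push_neg
      exact ⟨by simp [Prod.ext_iff], hnot hν hb _ (by omega) le_rfl⟩
    · rw [Finset.mem_insert]
      push_neg
      exact ⟨by simp [Prod.ext_iff], hnot hν hb _ le_rfl (by omega)⟩
  have h4 : ¬ IsRem ν b := fun h => hb.1 h.1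
  rw [Fd, if_neg h1, if_pos h2, if_pos hb, if_neg h4]
  ring

lemma Fd_right :
    Fd z z' ν b (b.1, b.2 + 1)
      = if b.1 = 0 ∨ (b.1 - 1, b.2 + 1) ∈ ν then W z z' (b.1, b.2 + 1) else 0 := by
  set p : ℕ × ℕ := (b.1, b.2 + 1) with hp
  have hpν : p ∉ ν := hnot hν hb p le_rfl (by simp [hp])
  have hpμ : p ∉ insert b ν := by
    rw [Finset.mem_insert]; push_neg
    exact ⟨by simp [hp, Prod.ext_iff], hpν⟩
  have hAν : ¬ IsAdd ν p := by
    rintro ⟨-, -, h3 | h3⟩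
    · simp [hp] at h3
    · simp only [hp, Nat.add_sub_cancel] at h3
      exact hb.1 h3
  have hRμ : ¬ IsRem (insert b ν) p := fun h => hpμ h.1
  have hRν : ¬ IsRem ν p := fun h => hpν h.1
  have hAμ : IsAdd (insert b ν) p ↔ (b.1 = 0 ∨ (b.1 - 1, b.2 + 1) ∈ ν) := by
    constructor
    · rintro ⟨-, h2 | h2, -⟩
      · exact Or.inl h2
      · rcases Finset.mem_insert.1 h2 with h | h
        · exfalso; simp [hp, Prod.ext_iff] at h
        · exact Or.inr h
    · intro h
      refine ⟨hpμ, ?_, Or.inr ?_⟩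
      · rcases h with h | h
        · exact Or.inl h
        · exact Or.inr (Finset.mem_insert_of_mem h)
      · show (b.1, b.2 + 1 - 1) ∈ insert b ν
        simp
  rw [Fd, if_neg hAν, if_neg hRμ, if_neg hRν]
  by_cases hd : b.1 = 0 ∨ (b.1 - 1, b.2 + 1) ∈ ν
  · rw [if_pos (hAμ.2 hd), if_pos hd]; ring
  · rw [if_neg (fun h => hd (hAμ.1 h)), if_neg hd]; ring

lemma Fd_up (h0 : b.1 ≠ 0) :
    Fd z z' ν b (b.1 - 1, b.2)
      = if (b.1 - 1, b.2 + 1) ∈ ν then 0 else W z z' (b.1 - 1, b.2) := by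
  set p : ℕ × ℕ := (b.1 - 1, b.2) with hp
  have hpν : p ∈ ν := by
    rcases hb.2.1 with h | h
    · exact absurd h h0
    · exact h
  have hAν : ¬ IsAdd ν p := fun h => h.1 hpν
  have hAμ : ¬ IsAdd (insert b ν) p := fun h => h.1 (Finset.mem_insert_of_mem hpν)
  have hsucc : (p.1 + 1, p.2) = b := by
    simp only [hp]; exact Prod.ext (by omega) rfl
  have hRμ : ¬ IsRem (insert b ν) p := by
    rintro ⟨-, h2, -⟩
    rw [hsucc] at h2
    exact h2 (Finset.mem_insert_self _ _)
  have hRν : IsRem ν p ↔ (b.1 - 1, b.2 + 1) ∉ ν := by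
    constructor
    · rintro ⟨-, -, h3⟩; exact h3
    · intro h
      refine ⟨hpν, ?_, h⟩
      rw [hsucc]; exact hb.1
  rw [Fd, if_neg hAν, if_neg hAμ, if_neg hRμ]
  by_cases hd : (b.1 - 1, b.2 + 1) ∈ ν
  · rw [if_neg (fun h => (hRν.1 h) hd), if_pos hd]; ring
  · rw [if_pos (hRν.2 hd), if_neg hd]; ring

lemma Fd_down :
    Fd z z' ν b (b.1 + 1, b.2)
      = if b.2 = 0 ∨ (b.1 + 1, b.2 - 1) ∈ ν then W z z' (b.1 + 1, b.2) else 0 := by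
  set p : ℕ × ℕ := (b.1 + 1, b.2) with hp
  have hpν : p ∉ ν := hnot hν hb p (by simp [hp]) le_rfl
  have hpμ : p ∉ insert b ν := by
    rw [Finset.mem_insert]; push_neg
    exact ⟨by simp [hp, Prod.ext_iff], hpν⟩
  have hAν : ¬ IsAdd ν p := by
    rintro ⟨-, h2 | h2, -⟩
    · simp [hp] at h2
    · simp only [hp, Nat.add_sub_cancel] at h2
      exact hb.1 h2
  have hRμ : ¬ IsRem (insert b ν) p := fun h => hpμ h.1
  have hRν : ¬ IsRem ν p := fun h => hpν h.1
  have hAμ : IsAdd (insert b ν) p ↔ (b.2 = 0 ∨ (b.1 + 1, b.2 - 1) ∈ ν) := by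
    constructor
    · rintro ⟨-, -, h2 | h2⟩
      · exact Or.inl h2
      · rcases Finset.mem_insert.1 h2 with h | h
        · exfalso; simp [hp, Prod.ext_iff] at h
        · exact Or.inr h
    · intro h
      refine ⟨hpμ, Or.inr ?_, ?_⟩
      · show (b.1 + 1 - 1, b.2) ∈ insert b ν
        simp
      · rcases h with h | h
        · exact Or.inl h
        · exact Or.inr (Finset.mem_insert_of_mem h)
  rw [Fd, if_neg hAν, if_neg hRμ, if_neg hRν]
  by_cases hd : b.2 = 0 ∨ (b.1 + 1, b.2 - 1) ∈ ν
  · rw [if_pos (hAμ.2 hd), if_pos hd]; ring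
  · rw [if_neg (fun h => hd (hAμ.1 h)), if_neg hd]; ring

lemma Fd_left (h0 : b.2 ≠ 0) :
    Fd z z' ν b (b.1, b.2 - 1)
      = if (b.1 + 1, b.2 - 1) ∈ ν then 0 else W z z' (b.1, b.2 - 1) := by
  set p : ℕ × ℕ := (b.1, b.2 - 1) with hp
  have hpν : p ∈ ν := by
    rcases hb.2.2 with h | h
    · exact absurd h h0
    · exact h
  have hAν : ¬ IsAdd ν p := fun h => h.1 hpν
  have hAμ : ¬ IsAdd (insert b ν) p := fun h => h.1 (Finset.mem_insert_of_mem hpν)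
  have hsucc : (p.1, p.2 + 1) = b := by
    simp only [hp]; exact Prod.ext rfl (by omega)
  have hRμ : ¬ IsRem (insert b ν) p := by
    rintro ⟨-, -, h3⟩
    rw [hsucc] at h3
    exact h3 (Finset.mem_insert_self _ _)
  have hRν : IsRem ν p ↔ (b.1 + 1, b.2 - 1) ∉ ν := by
    constructor
    · rintro ⟨-, h2, -⟩; exact h2
    · intro h
      refine ⟨hpν, h, ?_⟩
      rw [hsucc]; exact hb.1
  rw [Fd, if_neg hAν, if_neg hAμ, if_neg hRμ]
  by_cases hd : (b.1 + 1, b.2 - 1) ∈ ν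
  · rw [if_neg (fun h => (hRν.1 h) hd), if_pos hd]; ring
  · rw [if_pos (hRν.2 hd), if_neg hd]; ring

lemma Fd_zero {p : ℕ × ℕ} (h1 : p ≠ b) (h2 : p ≠ (b.1, b.2 + 1)) (h3 : p ≠ (b.1 + 1, b.2))
    (h4 : p ≠ (b.1 - 1, b.2) ∨ b.1 = 0) (h5 : p ≠ (b.1, b.2 - 1) ∨ b.2 = 0) :
    Fd z z' ν b p = 0 := by
  have hmem : p ∈ insert b ν ↔ p ∈ ν := by
    rw [Finset.mem_insert]
    exact ⟨fun h => h.resolve_left h1, Or.inr⟩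
  have hA : IsAdd (insert b ν) p ↔ IsAdd ν p := by
    unfold IsAdd
    rw [hmem]
    refine and_congr_right fun _ => and_congr ?_ ?_
    · by_cases hp1 : p.1 = 0
      · simp [hp1]
      · have hne : (p.1 - 1, p.2) ≠ b := by
          intro h
          apply h3
          rw [← h]
          exact Prod.ext (by simp; omega) rfl
        rw [Finset.mem_insert]
        simp [hne]
    · by_cases hp2 : p.2 = 0
      · simp [hp2]
      · have hne : (p.1, p.2 - 1) ≠ b := by
          intro h
          apply h2
          rw [← h]
          exact Prod.ext rfl (by simp; omega)
        rw [Finset.mem_insert]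
        simp [hne]
  have hR : IsRem (insert b ν) p ↔ IsRem ν p := by
    unfold IsRem
    rw [hmem]
    refine and_congr_right fun _ => and_congr ?_ ?_
    · have hne : (p.1 + 1, p.2) ≠ b := by
        intro h
        rcases h4 with h4 | h4
        · apply h4
          rw [← h]
          exact Prod.ext (by simp) rfl
        · have := congrArg Prod.fst h
          simp [h4] at this
      rw [Finset.mem_insert]
      simp [hne]
    · have hne : (p.1, p.2 + 1) ≠ b := by
        intro h
        rcases h5 with h5 | h5
        · apply h5
          rw [← h]
          exact Prod.ext rfl (by simp)
        · have := congrArg Prod.snd h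
          simp [h5] at this
      rw [Finset.mem_insert]
      simp [hne]
  rw [Fd]
  rw [if_congr hA rfl rfl, if_congr hR rfl rfl]
  ring

end StepAux

end FdAux

section StepProof
open StepAux


lemma main_sum {ν : Finset (ℕ × ℕ)} (hν : IsYD ν) {b : ℕ × ℕ} (hb : IsAdd ν b) (z z' : ℂ)
    {N : ℕ} (hN : N = ν.card + 2) :
    ∑ p ∈ Finset.range N ×ˢ Finset.range N, Fd z z' ν b p = 2 := by
  classical
  have hbd := isAdd_bound hν hb
  obtain ⟨i, j⟩ := b
  simp only [Prod.fst, Prod.snd] at hbd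
  obtain ⟨hb1, hb2⟩ := hbd
  have Fc : Fd z z' ν (i, j) (i, j) = -(2 * W z z' (i, j)) := StepAux.Fd_center z z' hν hb
  cases i with
  | zero =>
    cases j with
    | zero =>
      have FR : Fd z z' ν (0, 0) (0, 1) = W z z' (0, 1) := by
        simpa using StepAux.Fd_right z z' hν hb
      have FD : Fd z z' ν (0, 0) (1, 0) = W z z' (1, 0) := by
        simpa using StepAux.Fd_down z z' hν hb
      have hTB : ({(0,0), (0,1), (1,0)} : Finset (ℕ × ℕ)) ⊆ Finset.range N ×ˢ Finset.range N := by
        intro p hp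
        simp only [Finset.mem_insert, Finset.mem_singleton] at hp
        simp only [Finset.mem_product, Finset.mem_range]
        rcases hp with rfl | rfl | rfl <;> constructor <;> omega
      rw [← Finset.sum_subset hTB (fun p _ hpT => by
        simp only [Finset.mem_insert, Finset.mem_singleton, not_or] at hpT
        exact StepAux.Fd_zero z z' hν hb hpT.1 hpT.2.1 hpT.2.2 (Or.inr rfl) (Or.inr rfl))]
      rw [Finset.sum_insert (by decide), Finset.sum_insert (by decide), Finset.sum_singleton]
      rw [Fc, FR, FD]
      simp only [W]
      push_cast
      ring
    | succ j =>
      have FR : Fd z z' ν (0, j+1) (0, j+1+1) = W z z' (0, j+1+1) := by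
        simpa using StepAux.Fd_right z z' hν hb
      have FD : Fd z z' ν (0, j+1) (1, j+1)
          = if (1, j) ∈ ν then W z z' (1, j+1) else 0 := by
        simpa using StepAux.Fd_down z z' hν hb
      have FL : Fd z z' ν (0, j+1) (0, j)
          = if (1, j) ∈ ν then 0 else W z z' (0, j) := by
        simpa using StepAux.Fd_left z z' hν hb (by simp)
      have hTB : ({(0,j+1), (0,j+1+1), (1,j+1), (0,j)} : Finset (ℕ × ℕ))
          ⊆ Finset.range N ×ˢ Finset.range N := by
        intro p hp
        simp only [Finset.mem_insert, Finset.mem_singleton] at hp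
        simp only [Finset.mem_product, Finset.mem_range]
        rcases hp with rfl | rfl | rfl | rfl <;> constructor <;> omega
      rw [← Finset.sum_subset hTB (fun p _ hpT => by
        simp only [Finset.mem_insert, Finset.mem_singleton, not_or] at hpT
        exact StepAux.Fd_zero z z' hν hb hpT.1 hpT.2.1 hpT.2.2.1 (Or.inr rfl) (Or.inl hpT.2.2.2))]
      rw [Finset.sum_insert (by simp only [Finset.mem_insert, Finset.mem_singleton,
            Prod.mk.injEq, not_or]; omega),
          Finset.sum_insert (by simp only [Finset.mem_insert, Finset.mem_singleton,
            Prod.mk.injEq, not_or]; omega),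
          Finset.sum_insert (by simp only [Finset.mem_singleton, Prod.mk.injEq, not_or]; omega),
          Finset.sum_singleton]
      rw [Fc, FR, FD, FL]
      by_cases hX : (1, j) ∈ ν <;> simp only [hX, if_true, if_false, W] <;> push_cast <;> ring
  | succ i =>
    cases j with
    | zero =>
      have FR : Fd z z' ν (i+1, 0) (i+1, 1)
          = if (i, 1) ∈ ν then W z z' (i+1, 1) else 0 := by
        simpa using StepAux.Fd_right z z' hν hb
      have FD : Fd z z' ν (i+1, 0) (i+1+1, 0) = W z z' (i+1+1, 0) := by
        simpa using StepAux.Fd_down z z' hν hb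
      have FU : Fd z z' ν (i+1, 0) (i, 0)
          = if (i, 1) ∈ ν then 0 else W z z' (i, 0) := by
        simpa using StepAux.Fd_up z z' hν hb (by simp)
      have hTB : ({(i+1,0), (i+1,1), (i+1+1,0), (i,0)} : Finset (ℕ × ℕ))
          ⊆ Finset.range N ×ˢ Finset.range N := by
        intro p hp
        simp only [Finset.mem_insert, Finset.mem_singleton] at hp
        simp only [Finset.mem_product, Finset.mem_range]
        rcases hp with rfl | rfl | rfl | rfl <;> constructor <;> omega
      rw [← Finset.sum_subset hTB (fun p _ hpT => by
        simp only [Finset.mem_insert, Finset.mem_singleton, not_or] at hpT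
        exact StepAux.Fd_zero z z' hν hb hpT.1 hpT.2.1 hpT.2.2.1 (Or.inl hpT.2.2.2) (Or.inr rfl))]
      rw [Finset.sum_insert (by simp only [Finset.mem_insert, Finset.mem_singleton,
            Prod.mk.injEq, not_or]; omega),
          Finset.sum_insert (by simp only [Finset.mem_insert, Finset.mem_singleton,
            Prod.mk.injEq, not_or]; omega),
          Finset.sum_insert (by simp only [Finset.mem_singleton, Prod.mk.injEq, not_or]; omega),
          Finset.sum_singleton]
      rw [Fc, FR, FD, FU]
      by_cases hX : (i, 1) ∈ ν <;> simp only [hX, if_true, if_false, W] <;> push_cast <;> ring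
    | succ j =>
      have FR : Fd z z' ν (i+1, j+1) (i+1, j+1+1)
          = if (i, j+1+1) ∈ ν then W z z' (i+1, j+1+1) else 0 := by
        simpa using StepAux.Fd_right z z' hν hb
      have FD : Fd z z' ν (i+1, j+1) (i+1+1, j+1)
          = if (i+1+1, j) ∈ ν then W z z' (i+1+1, j+1) else 0 := by
        simpa using StepAux.Fd_down z z' hν hb
      have FU : Fd z z' ν (i+1, j+1) (i, j+1)
          = if (i, j+1+1) ∈ ν then 0 else W z z' (i, j+1) := by
        simpa using StepAux.Fd_up z z' hν hb (by simp)
      have FL : Fd z z' ν (i+1, j+1) (i+1, j)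
          = if (i+1+1, j) ∈ ν then 0 else W z z' (i+1, j) := by
        simpa using StepAux.Fd_left z z' hν hb (by simp)
      have hTB : ({(i+1,j+1), (i+1,j+1+1), (i+1+1,j+1), (i,j+1), (i+1,j)} : Finset (ℕ × ℕ))
          ⊆ Finset.range N ×ˢ Finset.range N := by
        intro p hp
        simp only [Finset.mem_insert, Finset.mem_singleton] at hp
        simp only [Finset.mem_product, Finset.mem_range]
        rcases hp with rfl | rfl | rfl | rfl | rfl <;> constructor <;> omega
      rw [← Finset.sum_subset hTB (fun p _ hpT => by
        simp only [Finset.mem_insert, Finset.mem_singleton, not_or] at hpT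
        exact StepAux.Fd_zero z z' hν hb hpT.1 hpT.2.1 hpT.2.2.1 (Or.inl hpT.2.2.2.1)
          (Or.inl hpT.2.2.2.2))]
      rw [Finset.sum_insert (by simp only [Finset.mem_insert, Finset.mem_singleton,
            Prod.mk.injEq, not_or]; omega),
          Finset.sum_insert (by simp only [Finset.mem_insert, Finset.mem_singleton,
            Prod.mk.injEq, not_or]; omega),
          Finset.sum_insert (by simp only [Finset.mem_insert, Finset.mem_singleton,
            Prod.mk.injEq, not_or]; omega),
          Finset.sum_insert (by simp only [Finset.mem_singleton, Prod.mk.injEq, not_or]; omega),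
          Finset.sum_singleton]
      rw [Fc, FR, FD, FU, FL]
      by_cases hX1 : (i, j+1+1) ∈ ν <;> by_cases hX2 : (i+1+1, j) ∈ ν <;>
        simp only [hX1, hX2, if_true, if_false, W] <;> push_cast <;> ring


lemma step_sum {ν : Finset (ℕ × ℕ)} (hν : IsYD ν) {b : ℕ × ℕ} (hb : IsAdd ν b) (z z' : ℂ) :
    ∑ p ∈ addSet (insert b ν), W z z' p - ∑ p ∈ remSet (insert b ν), W z z' p
      = (∑ p ∈ addSet ν, W z z' p - ∑ p ∈ remSet ν, W z z' p) + 2 := by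
  classical
  have hbn : b ∉ ν := hb.1
  have hμYD : IsYD (insert b ν) := ((isAdd_iff hν b).1 hb).2
  have hcμ : (insert b ν).card = ν.card + 1 := Finset.card_insert_of_notMem hbn
  set N := ν.card + 2 with hN
  have hA1 : ∑ p ∈ addSet (insert b ν), W z z' p
      = ∑ p ∈ Finset.range N ×ˢ Finset.range N, (if IsAdd (insert b ν) p then W z z' p else 0) := by
    rw [addSet_eq_filter hμYD (N := N) (by omega), Finset.sum_filter]
  have hA2 : ∑ p ∈ addSet ν, W z z' p
      = ∑ p ∈ Finset.range N ×ˢ Finset.range N, (if IsAdd ν p then W z z' p else 0) := by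
    rw [addSet_eq_filter hν (N := N) (by omega), Finset.sum_filter]
  have hR1 : ∑ p ∈ remSet (insert b ν), W z z' p
      = ∑ p ∈ Finset.range N ×ˢ Finset.range N, (if IsRem (insert b ν) p then W z z' p else 0) := by
    rw [remSet_eq_filter hμYD (N := N) (by omega), Finset.sum_filter]
  have hR2 : ∑ p ∈ remSet ν, W z z' p
      = ∑ p ∈ Finset.range N ×ˢ Finset.range N, (if IsRem ν p then W z z' p else 0) := by
    rw [remSet_eq_filter hν (N := N) (by omega), Finset.sum_filter]
  have expand : ∑ p ∈ Finset.range N ×ˢ Finset.range N, Fd z z' ν b p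
      = ∑ p ∈ Finset.range N ×ˢ Finset.range N, (if IsAdd (insert b ν) p then W z z' p else 0)
        - ∑ p ∈ Finset.range N ×ˢ Finset.range N, (if IsRem (insert b ν) p then W z z' p else 0)
        - ∑ p ∈ Finset.range N ×ˢ Finset.range N, (if IsAdd ν p then W z z' p else 0)
        + ∑ p ∈ Finset.range N ×ˢ Finset.range N, (if IsRem ν p then W z z' p else 0) := by
    rw [← Finset.sum_sub_distrib, ← Finset.sum_sub_distrib, ← Finset.sum_add_distrib]
    rfl
  have main : ∑ p ∈ Finset.range N ×ˢ Finset.range N, Fd z z' ν b p = 2 :=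
    main_sum hν hb z z' hN
  rw [hA1, hR1, hA2, hR2]
  rw [expand] at main
  linear_combination main

lemma content_sum (z z' : ℂ) : ∀ (n : ℕ) (s : Finset (ℕ × ℕ)), IsYD s → s.card = n →
    ∑ p ∈ addSet s, W z z' p = z * z' + 2 * n + ∑ p ∈ remSet s, W z z' p := by
  intro n
  induction n with
  | zero =>
    intro s hs hcard
    have hse : s = ∅ := Finset.card_eq_zero.1 hcard
    subst hse
    have ha : addSet (∅ : Finset (ℕ × ℕ)) = {(0,0)} := by
      ext p
      rw [mem_addSet isYD_empty]
      simp only [Finset.mem_singleton, IsAdd]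
      constructor
      · rintro ⟨h1, h2, h3⟩
        simp at h2 h3
        exact Prod.ext h2 h3
      · rintro rfl; simp
    have hr : remSet (∅ : Finset (ℕ × ℕ)) = ∅ := by
      ext p; rw [mem_remSet]; simp [IsRem]
    rw [ha, hr]
    simp [W]
  | succ n ih =>
    intro s hs hcard
    have hne : s.Nonempty := by rw [← Finset.card_pos]; omega
    obtain ⟨b, hb⟩ := exists_isRem hs hne
    have hbmem : b ∈ s := hb.1
    have hν : IsYD (s.erase b) := ((isRem_iff hs b).1 hb).2
    have hbν : b ∉ s.erase b := Finset.notMem_erase _ _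
    have hins : insert b (s.erase b) = s := Finset.insert_erase hbmem
    have hbadd : IsAdd (s.erase b) b := (isAdd_iff hν b).2 ⟨hbν, by rwa [hins]⟩
    have hcν : (s.erase b).card = n := by
      rw [Finset.card_erase_of_mem hbmem]; omega
    have hstep := step_sum hν hbadd z z'
    rw [hins] at hstep
    have hIH := ih (s.erase b) hν hcν
    have : (n + 1 : ℕ) = (n : ℂ) + 1 := by push_cast; ring
    rw [this]
    have h2 : ∑ p ∈ addSet s, W z z' p - ∑ p ∈ remSet s, W z z' p
        = z * z' + 2 * n + 2 := by rw [hstep, hIH]; ring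
    have := sub_eq_iff_eq_add.1 h2
    rw [this]; ring

end StepProof

lemma isRem_insert {ν : Finset (ℕ × ℕ)} (hν : IsYD ν) {b : ℕ × ℕ} (hb : IsAdd ν b) :
    IsRem (insert b ν) b := by
  refine ⟨Finset.mem_insert_self _ _, ?_, ?_⟩
  · rw [Finset.mem_insert]; push_neg
    exact ⟨by simp [Prod.ext_iff], StepAux.hnot hν hb _ (by omega) le_rfl⟩
  · rw [Finset.mem_insert]; push_neg
    exact ⟨by simp [Prod.ext_iff], StepAux.hnot hν hb _ le_rfl (by omega)⟩

lemma isAdd_erase_self {μ : Finset (ℕ × ℕ)} (hμ : IsYD μ) {b' : ℕ × ℕ} (hb' : b' ∈ μ) :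
    IsAdd (μ.erase b') b' := by
  refine ⟨Finset.notMem_erase _ _, ?_, ?_⟩
  · rcases Nat.eq_zero_or_pos b'.1 with h0 | h0
    · exact Or.inl h0
    · refine Or.inr (Finset.mem_erase.2 ⟨?_, hμ _ hb' _ (by omega) le_rfl⟩)
      intro h
      have := congrArg Prod.fst h
      simp at this
      omega
  · rcases Nat.eq_zero_or_pos b'.2 with h0 | h0
    · exact Or.inl h0
    · refine Or.inr (Finset.mem_erase.2 ⟨?_, hμ _ hb' _ le_rfl (by omega)⟩)
      intro h
      have := congrArg Prod.snd h
      simp at this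
      omega

lemma rem_insert_iff {μ : Finset (ℕ × ℕ)} (hμ : IsYD μ) {b b' : ℕ × ℕ}
    (hb : IsAdd μ b) (hne : b' ≠ b) :
    IsRem (insert b μ) b' ↔ IsRem μ b' ∧ IsAdd (μ.erase b') b := by
  constructor
  · rintro ⟨h1, h2, h3⟩
    have hb'μ : b' ∈ μ := (Finset.mem_insert.1 h1).resolve_left hne
    have hs1 : (b'.1 + 1, b'.2) ∉ μ := fun h => h2 (Finset.mem_insert_of_mem h)
    have hs2 : (b'.1, b'.2 + 1) ∉ μ := fun h => h3 (Finset.mem_insert_of_mem h)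
    refine ⟨⟨hb'μ, hs1, hs2⟩, ?_, ?_, ?_⟩
    · intro h; exact hb.1 (Finset.mem_of_mem_erase h)
    · rcases hb.2.1 with h0 | h0
      · exact Or.inl h0
      · by_cases hb1 : b.1 = 0
        · exfalso
          have hbb : (b.1 - 1, b.2) = b := Prod.ext (by omega) rfl
          rw [hbb] at h0
          exact hb.1 h0
        · refine Or.inr (Finset.mem_erase.2 ⟨?_, h0⟩)
          intro h
          apply h2
          have hbeq : b = (b'.1 + 1, b'.2) := by
            have e1 := congrArg Prod.fst h
            have e2 := congrArg Prod.snd h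
            simp at e1 e2
            exact Prod.ext (by omega) (by omega)
          rw [← hbeq]
          exact Finset.mem_insert_self _ _
    · rcases hb.2.2 with h0 | h0
      · exact Or.inl h0
      · by_cases hb2 : b.2 = 0
        · exfalso
          have hbb : (b.1, b.2 - 1) = b := Prod.ext rfl (by omega)
          rw [hbb] at h0
          exact hb.1 h0
        · refine Or.inr (Finset.mem_erase.2 ⟨?_, h0⟩)
          intro h
          apply h3
          have hbeq : b = (b'.1, b'.2 + 1) := by
            have e1 := congrArg Prod.fst h
            have e2 := congrArg Prod.snd h
            simp at e1 e2
            exact Prod.ext (by omega) (by omega)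
          rw [← hbeq]
          exact Finset.mem_insert_self _ _
  · rintro ⟨⟨h1, h2, h3⟩, ha⟩
    refine ⟨Finset.mem_insert_of_mem h1, ?_, ?_⟩
    · rw [Finset.mem_insert]; push_neg
      refine ⟨?_, h2⟩
      intro h
      rcases ha.2.1 with h0 | h0
      · rw [← h] at h0; simp at h0
      · rw [← h] at h0
        simp only [Nat.add_sub_cancel] at h0
        exact Finset.notMem_erase _ _ h0
    · rw [Finset.mem_insert]; push_neg
      refine ⟨?_, h3⟩
      intro h
      rcases ha.2.2 with h0 | h0
      · rw [← h] at h0; simp at h0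
      · rw [← h] at h0
        simp only [Nat.add_sub_cancel] at h0
        exact Finset.notMem_erase _ _ h0

lemma remSet_filter_eq {s : Finset (ℕ × ℕ)} (hs : IsYD s) :
    s.filter (fun p => IsYD (s.erase p) ∧ ∅ ⊆ s.erase p) = remSet s := by
  ext p
  rw [Finset.mem_filter, mem_remSet]
  constructor
  · rintro ⟨h1, h2, -⟩; exact (isRem_iff hs p).2 ⟨h1, h2⟩
  · intro h
    exact ⟨h.1, ((isRem_iff hs p).1 h).2, Finset.empty_subset _⟩

lemma dim_rec {s : Finset (ℕ × ℕ)} (hs : IsYD s) (n : ℕ) :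
    skewDim (n + 1) ∅ s = ∑ p ∈ remSet s, skewDim n ∅ (s.erase p) := by
  rw [skewDim, remSet_filter_eq hs]

lemma star (z z' : ℂ) (n : ℕ) :
    ∀ μ : Finset (ℕ × ℕ), IsYD μ → μ.card = n →
      ∑ b ∈ addSet μ,
          contentPoch z (insert b μ) * contentPoch z' (insert b μ)
            * (skewDim (n + 1) ∅ (insert b μ) : ℂ)
        = ((n : ℂ) + 1) * (z * z' + n)
            * (contentPoch z μ * contentPoch z' μ * (skewDim n ∅ μ : ℂ)) := by
  induction n using Nat.strong_induction_on with
  | _ n ih =>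
  intro μ hμ hc
  -- expansion of each dimension via the recursion
  have expand : ∀ b ∈ addSet μ,
      contentPoch z (insert b μ) * contentPoch z' (insert b μ)
        * (skewDim (n + 1) ∅ (insert b μ) : ℂ)
      = (∑ b' ∈ (remSet (insert b μ)).erase b,
          contentPoch z (insert b μ) * contentPoch z' (insert b μ)
            * (skewDim n ∅ ((insert b μ).erase b') : ℂ))
        + contentPoch z (insert b μ) * contentPoch z' (insert b μ)
            * (skewDim n ∅ μ : ℂ) := by
    intro b hb
    have hbA := (mem_addSet hμ).1 hb
    have hins : IsYD (insert b μ) := ((isAdd_iff hμ b).1 hbA).2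
    have hbrem : b ∈ remSet (insert b μ) := mem_remSet.2 (isRem_insert hμ hbA)
    rw [dim_rec hins, Nat.cast_sum, Finset.mul_sum,
      ← Finset.sum_erase_add _ _ hbrem, Finset.erase_insert hbA.1]
  rw [Finset.sum_congr rfl expand, Finset.sum_add_distrib]
  -- diagonal part
  have diag : ∑ b ∈ addSet μ,
      contentPoch z (insert b μ) * contentPoch z' (insert b μ) * (skewDim n ∅ μ : ℂ)
      = (z * z' + 2 * n + ∑ p ∈ remSet μ, W z z' p)
        * (contentPoch z μ * contentPoch z' μ * (skewDim n ∅ μ : ℂ)) := by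
    have hterm : ∀ b ∈ addSet μ,
        contentPoch z (insert b μ) * contentPoch z' (insert b μ) * (skewDim n ∅ μ : ℂ)
        = W z z' b * (contentPoch z μ * contentPoch z' μ * (skewDim n ∅ μ : ℂ)) := by
      intro b hb
      have hbA := (mem_addSet hμ).1 hb
      have c1 : contentPoch z (insert b μ)
          = (z + (b.2 : ℂ) - (b.1 : ℂ)) * contentPoch z μ := Finset.prod_insert hbA.1
      have c2 : contentPoch z' (insert b μ)
          = (z' + (b.2 : ℂ) - (b.1 : ℂ)) * contentPoch z' μ := Finset.prod_insert hbA.1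
      rw [c1, c2, W]
      ring
    rw [Finset.sum_congr rfl hterm, ← Finset.sum_mul, content_sum z z' n μ hμ hc]
  -- re-indexing of the off-diagonal part
  have reindex : ∑ b ∈ addSet μ, ∑ b' ∈ (remSet (insert b μ)).erase b,
        contentPoch z (insert b μ) * contentPoch z' (insert b μ)
          * (skewDim n ∅ ((insert b μ).erase b') : ℂ)
      = ∑ b' ∈ remSet μ, ∑ b ∈ (addSet (μ.erase b')).erase b',
          contentPoch z (insert b μ) * contentPoch z' (insert b μ)
            * (skewDim n ∅ ((insert b μ).erase b') : ℂ) := by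
    rw [Finset.sum_sigma', Finset.sum_sigma']
    refine Finset.sum_nbij' (fun x => ⟨x.2, x.1⟩) (fun y => ⟨y.2, y.1⟩) ?_ ?_
      (fun x _ => rfl) (fun y _ => rfl) (fun x _ => rfl)
    · rintro ⟨b, b'⟩ hx
      simp only [Finset.mem_sigma] at hx ⊢
      obtain ⟨hb, hb'⟩ := hx
      have hbA := (mem_addSet hμ).1 hb
      have hne : b' ≠ b := Finset.ne_of_mem_erase hb'
      have hRlam : IsRem (insert b μ) b' := mem_remSet.1 (Finset.mem_of_mem_erase hb')
      obtain ⟨hRμ, hAε⟩ := (rem_insert_iff hμ hbA hne).1 hRlam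
      have hYDε : IsYD (μ.erase b') := ((isRem_iff hμ b').1 hRμ).2
      refine ⟨mem_remSet.2 hRμ, Finset.mem_erase.2 ⟨?_, (mem_addSet hYDε).2 hAε⟩⟩
      exact fun h => hbA.1 (h ▸ hRμ.1)
    · rintro ⟨b', b⟩ hy
      simp only [Finset.mem_sigma] at hy ⊢
      obtain ⟨hb', hb⟩ := hy
      have hRμ : IsRem μ b' := mem_remSet.1 hb'
      have hYDε : IsYD (μ.erase b') := ((isRem_iff hμ b').1 hRμ).2
      have hne : b ≠ b' := Finset.ne_of_mem_erase hb
      have hAε : IsAdd (μ.erase b') b := (mem_addSet hYDε).1 (Finset.mem_of_mem_erase hb)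
      have hbA : IsAdd μ b := by
        refine ⟨?_, ?_, ?_⟩
        · intro h; exact hAε.1 (Finset.mem_erase.2 ⟨hne, h⟩)
        · rcases hAε.2.1 with h | h
          · exact Or.inl h
          · exact Or.inr (Finset.mem_of_mem_erase h)
        · rcases hAε.2.2 with h | h
          · exact Or.inl h
          · exact Or.inr (Finset.mem_of_mem_erase h)
      refine ⟨(mem_addSet hμ).2 hbA, Finset.mem_erase.2
        ⟨hne.symm, mem_remSet.2 ((rem_insert_iff hμ hbA hne.symm).2 ⟨hRμ, hAε⟩)⟩⟩
  rw [reindex]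
  -- inner sums of the off-diagonal part
  have inner : ∀ b' ∈ remSet μ,
      ∑ b ∈ (addSet (μ.erase b')).erase b',
          contentPoch z (insert b μ) * contentPoch z' (insert b μ)
            * (skewDim n ∅ ((insert b μ).erase b') : ℂ)
        = W z z' b' * ((n : ℂ) * (z * z' + (n : ℂ) - 1)
            * (contentPoch z (μ.erase b') * contentPoch z' (μ.erase b')
               * (skewDim (n - 1) ∅ (μ.erase b') : ℂ))
            - contentPoch z μ * contentPoch z' μ * (skewDim n ∅ μ : ℂ)) := by
    intro b' hb'
    have hRμ : IsRem μ b' := mem_remSet.1 hb'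
    have hYDε : IsYD (μ.erase b') := ((isRem_iff hμ b').1 hRμ).2
    have hb'A : IsAdd (μ.erase b') b' := isAdd_erase_self hμ hRμ.1
    have hn1 : 1 ≤ n := by
      rw [← hc]; exact Finset.card_pos.2 ⟨b', hRμ.1⟩
    have hεc : (μ.erase b').card = n - 1 := by
      rw [Finset.card_erase_of_mem hRμ.1, hc]
    have hterm : ∀ b ∈ (addSet (μ.erase b')).erase b',
        contentPoch z (insert b μ) * contentPoch z' (insert b μ)
          * (skewDim n ∅ ((insert b μ).erase b') : ℂ)
        = W z z' b' * (contentPoch z (insert b (μ.erase b'))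
            * contentPoch z' (insert b (μ.erase b'))
            * (skewDim n ∅ (insert b (μ.erase b')) : ℂ)) := by
      intro b hb
      have hbne : b ≠ b' := Finset.ne_of_mem_erase hb
      have hbA : IsAdd (μ.erase b') b := (mem_addSet hYDε).1 (Finset.mem_of_mem_erase hb)
      have hbε : b ∉ μ.erase b' := hbA.1
      have hbμ : b ∉ μ := fun h => hbε (Finset.mem_erase.2 ⟨hbne, h⟩)
      have e1 : (insert b μ).erase b' = insert b (μ.erase b') :=
        Finset.erase_insert_of_ne hbne
      have c1 : contentPoch z (insert b μ)
          = (z + (b.2 : ℂ) - (b.1 : ℂ)) * contentPoch z μ := Finset.prod_insert hbμ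
      have c2 : contentPoch z' (insert b μ)
          = (z' + (b.2 : ℂ) - (b.1 : ℂ)) * contentPoch z' μ := Finset.prod_insert hbμ
      have c3 : (z + (b'.2 : ℂ) - (b'.1 : ℂ)) * contentPoch z (μ.erase b')
          = contentPoch z μ := Finset.mul_prod_erase μ (fun p => z + (p.2 : ℂ) - (p.1 : ℂ)) hRμ.1
      have c4 : (z' + (b'.2 : ℂ) - (b'.1 : ℂ)) * contentPoch z' (μ.erase b')
          = contentPoch z' μ := Finset.mul_prod_erase μ (fun p => z' + (p.2 : ℂ) - (p.1 : ℂ)) hRμ.1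
      have c5 : contentPoch z (insert b (μ.erase b'))
          = (z + (b.2 : ℂ) - (b.1 : ℂ)) * contentPoch z (μ.erase b') :=
        Finset.prod_insert hbε
      have c6 : contentPoch z' (insert b (μ.erase b'))
          = (z' + (b.2 : ℂ) - (b.1 : ℂ)) * contentPoch z' (μ.erase b') :=
        Finset.prod_insert hbε
      rw [e1, c1, c2, ← c3, ← c4, c5, c6, W]
      ring
    rw [Finset.sum_congr rfl hterm, ← Finset.mul_sum]
    congr 1
    rw [Finset.sum_erase_eq_sub ((mem_addSet hYDε).2 hb'A)]
    have hins : insert b' (μ.erase b') = μ := Finset.insert_erase hRμ.1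
    have IH := ih (n - 1) (by omega) (μ.erase b') hYDε hεc
    have hnn : n - 1 + 1 = n := by omega
    rw [hnn] at IH
    rw [IH, hins]
    have hcast : ((n - 1 : ℕ) : ℂ) = (n : ℂ) - 1 := by
      rw [Nat.cast_sub hn1, Nat.cast_one]
    rw [hcast]
    ring
  rw [Finset.sum_congr rfl inner]
  -- split the off-diagonal part
  have split : ∑ b' ∈ remSet μ,
      W z z' b' * ((n : ℂ) * (z * z' + (n : ℂ) - 1)
        * (contentPoch z (μ.erase b') * contentPoch z' (μ.erase b')
           * (skewDim (n - 1) ∅ (μ.erase b') : ℂ))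
        - contentPoch z μ * contentPoch z' μ * (skewDim n ∅ μ : ℂ))
      = (n : ℂ) * (z * z' + (n : ℂ) - 1) * (contentPoch z μ * contentPoch z' μ)
          * (∑ b' ∈ remSet μ, (skewDim (n - 1) ∅ (μ.erase b') : ℂ))
        - (∑ b' ∈ remSet μ, W z z' b')
          * (contentPoch z μ * contentPoch z' μ * (skewDim n ∅ μ : ℂ)) := by
    rw [Finset.sum_mul, Finset.mul_sum, ← Finset.sum_sub_distrib]
    refine Finset.sum_congr rfl ?_
    intro b' hb'
    have hRμ : IsRem μ b' := mem_remSet.1 hb'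
    have c3 : (z + (b'.2 : ℂ) - (b'.1 : ℂ)) * contentPoch z (μ.erase b')
        = contentPoch z μ := Finset.mul_prod_erase μ (fun p => z + (p.2 : ℂ) - (p.1 : ℂ)) hRμ.1
    have c4 : (z' + (b'.2 : ℂ) - (b'.1 : ℂ)) * contentPoch z' (μ.erase b')
        = contentPoch z' μ := Finset.mul_prod_erase μ (fun p => z' + (p.2 : ℂ) - (p.1 : ℂ)) hRμ.1
    rw [W, ← c3, ← c4]
    ring
  rw [split, diag]
  -- the bridge identity
  have bridge : (∑ b' ∈ remSet μ, (skewDim (n - 1) ∅ (μ.erase b') : ℂ)) * (n : ℂ)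
      = (skewDim n ∅ μ : ℂ) * (n : ℂ) := by
    rcases Nat.eq_zero_or_pos n with h0 | h0
    · subst h0; simp
    · obtain ⟨m, rfl⟩ : ∃ m, n = m + 1 := ⟨n - 1, by omega⟩
      rw [dim_rec hμ m, Nat.cast_sum]
      simp
  linear_combination ((z * z' + (n : ℂ) - 1) * (contentPoch z μ * contentPoch z' μ)) * bridge

lemma mem_Mfilter {n : ℕ} {s : Finset (ℕ × ℕ)} :
    s ∈ (Finset.range n ×ˢ Finset.range n).powerset.filter
        (fun s => IsYD s ∧ s.card = n)
      ↔ IsYD s ∧ s.card = n := by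
  rw [Finset.mem_filter, Finset.mem_powerset]
  constructor
  · exact fun h => h.2
  · intro h
    refine ⟨?_, h⟩
    intro p hp
    have h1 := fst_lt_card h.1 hp
    have h2 := snd_lt_card h.1 hp
    rw [h.2] at h1 h2
    simp only [Finset.mem_product, Finset.mem_range]
    exact ⟨h1, h2⟩

lemma Mrec (z z' : ℂ) (n : ℕ) :
    ∑ s ∈ (Finset.range (n+1) ×ˢ Finset.range (n+1)).powerset.filter
        (fun s => IsYD s ∧ s.card = n + 1),
      contentPoch z s * contentPoch z' s * ((skewDim (n+1) ∅ s : ℂ)) ^ 2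
    = ((n : ℂ) + 1) * (z * z' + n) *
      ∑ s ∈ (Finset.range n ×ˢ Finset.range n).powerset.filter
        (fun s => IsYD s ∧ s.card = n),
      contentPoch z s * contentPoch z' s * ((skewDim n ∅ s : ℂ)) ^ 2 := by
  have hterm : ∀ s ∈ (Finset.range (n+1) ×ˢ Finset.range (n+1)).powerset.filter
      (fun s => IsYD s ∧ s.card = n + 1),
      contentPoch z s * contentPoch z' s * ((skewDim (n+1) ∅ s : ℂ)) ^ 2
      = ∑ b' ∈ remSet s,
          contentPoch z s * contentPoch z' s * (skewDim (n+1) ∅ s : ℂ)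
            * (skewDim n ∅ (s.erase b') : ℂ) := by
    intro s hs
    obtain ⟨hsYD, -⟩ := mem_Mfilter.1 hs
    have hd : ((skewDim (n+1) ∅ s : ℂ)) ^ 2
        = (skewDim (n+1) ∅ s : ℂ) * ∑ b' ∈ remSet s, (skewDim n ∅ (s.erase b') : ℂ) := by
      rw [← Nat.cast_sum, ← dim_rec hsYD]
      ring
    have h2 : contentPoch z s * contentPoch z' s * ((skewDim (n+1) ∅ s : ℂ)) ^ 2
        = (contentPoch z s * contentPoch z' s * (skewDim (n+1) ∅ s : ℂ))
          * ∑ b' ∈ remSet s, (skewDim n ∅ (s.erase b') : ℂ) := by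
      linear_combination (contentPoch z s * contentPoch z' s) * hd
    rw [h2, Finset.mul_sum]
  rw [Finset.sum_congr rfl hterm]
  rw [Finset.sum_sigma']
  have reind : ∑ x ∈ ((Finset.range (n+1) ×ˢ Finset.range (n+1)).powerset.filter
        (fun s => IsYD s ∧ s.card = n + 1)).sigma (fun s => remSet s),
        contentPoch z x.1 * contentPoch z' x.1 * (skewDim (n+1) ∅ x.1 : ℂ)
          * (skewDim n ∅ (x.1.erase x.2) : ℂ)
      = ∑ y ∈ ((Finset.range n ×ˢ Finset.range n).powerset.filter
        (fun s => IsYD s ∧ s.card = n)).sigma (fun μ => addSet μ),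
        contentPoch z (insert y.2 y.1) * contentPoch z' (insert y.2 y.1)
          * (skewDim (n+1) ∅ (insert y.2 y.1) : ℂ) * (skewDim n ∅ y.1 : ℂ) := by
    refine Finset.sum_nbij' (fun x => ⟨x.1.erase x.2, x.2⟩) (fun y => ⟨insert y.2 y.1, y.2⟩)
      ?_ ?_ ?_ ?_ ?_
    · rintro ⟨s, b'⟩ hx
      simp only [Finset.mem_sigma] at hx ⊢
      obtain ⟨hs, hb'⟩ := hx
      obtain ⟨hsYD, hsc⟩ := mem_Mfilter.1 hs
      have hR : IsRem s b' := mem_remSet.1 hb'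
      have hYDε : IsYD (s.erase b') := ((isRem_iff hsYD b').1 hR).2
      refine ⟨mem_Mfilter.2 ⟨hYDε, ?_⟩, (mem_addSet hYDε).2 (isAdd_erase_self hsYD hR.1)⟩
      rw [Finset.card_erase_of_mem hR.1, hsc]
      omega
    · rintro ⟨μ, b⟩ hy
      simp only [Finset.mem_sigma] at hy ⊢
      obtain ⟨hμm, hbm⟩ := hy
      obtain ⟨hμYD, hμc⟩ := mem_Mfilter.1 hμm
      have hbA : IsAdd μ b := (mem_addSet hμYD).1 hbm
      have hins : IsYD (insert b μ) := ((isAdd_iff hμYD b).1 hbA).2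
      refine ⟨mem_Mfilter.2 ⟨hins, ?_⟩, mem_remSet.2 (isRem_insert hμYD hbA)⟩
      rw [Finset.card_insert_of_notMem hbA.1, hμc]
    · rintro ⟨s, b'⟩ hx
      simp only [Finset.mem_sigma] at hx
      have hb' : b' ∈ s := (mem_remSet.1 hx.2).1
      simp [Finset.insert_erase hb']
    · rintro ⟨μ, b⟩ hy
      simp only [Finset.mem_sigma] at hy
      obtain ⟨hμm, hbm⟩ := hy
      obtain ⟨hμYD, -⟩ := mem_Mfilter.1 hμm
      have hbA : IsAdd μ b := (mem_addSet hμYD).1 hbm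
      simp [Finset.erase_insert hbA.1]
    · rintro ⟨s, b'⟩ hx
      simp only [Finset.mem_sigma] at hx
      have hb' : b' ∈ s := (mem_remSet.1 hx.2).1
      simp [Finset.insert_erase hb']
  have unsig : ∑ y ∈ ((Finset.range n ×ˢ Finset.range n).powerset.filter
        (fun s => IsYD s ∧ s.card = n)).sigma (fun μ => addSet μ),
        contentPoch z (insert y.2 y.1) * contentPoch z' (insert y.2 y.1)
          * (skewDim (n+1) ∅ (insert y.2 y.1) : ℂ) * (skewDim n ∅ y.1 : ℂ)
      = ∑ μ ∈ (Finset.range n ×ˢ Finset.range n).powerset.filter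
          (fun s => IsYD s ∧ s.card = n), ∑ b ∈ addSet μ,
          contentPoch z (insert b μ) * contentPoch z' (insert b μ)
            * (skewDim (n+1) ∅ (insert b μ) : ℂ) * (skewDim n ∅ μ : ℂ) :=
    (Finset.sum_sigma' _ _ (fun μ b => contentPoch z (insert b μ) * contentPoch z' (insert b μ)
      * (skewDim (n+1) ∅ (insert b μ) : ℂ) * (skewDim n ∅ μ : ℂ))).symm
  rw [reind, unsig]
  have hinner : ∀ μ ∈ (Finset.range n ×ˢ Finset.range n).powerset.filter
      (fun s => IsYD s ∧ s.card = n),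
      ∑ b ∈ addSet μ,
        contentPoch z (insert b μ) * contentPoch z' (insert b μ)
          * (skewDim (n+1) ∅ (insert b μ) : ℂ) * (skewDim n ∅ μ : ℂ)
      = ((n : ℂ) + 1) * (z * z' + n)
          * (contentPoch z μ * contentPoch z' μ * ((skewDim n ∅ μ : ℂ)) ^ 2) := by
    intro μ hμm
    obtain ⟨hμYD, hμc⟩ := mem_Mfilter.1 hμm
    rw [← Finset.sum_mul, star z z' n μ hμYD hμc]
    ring
  rw [Finset.sum_congr rfl hinner, ← Finset.mul_sum]

lemma Mval (z z' : ℂ) (n : ℕ) :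
    ∑ s ∈ (Finset.range n ×ˢ Finset.range n).powerset.filter
        (fun s => IsYD s ∧ s.card = n),
      contentPoch z s * contentPoch z' s * ((skewDim n ∅ s : ℂ)) ^ 2
    = (Nat.factorial n : ℂ) * (ascPochhammer ℂ n).eval (z * z') := by
  induction n with
  | zero =>
    rw [show (Finset.range 0 ×ˢ Finset.range 0).powerset.filter
        (fun s => IsYD s ∧ s.card = 0) = {∅} by
      ext s
      rw [mem_Mfilter]
      simp only [Finset.mem_singleton, Finset.card_eq_zero]
      constructor
      · exact fun h => h.2
      · rintro rfl; exact ⟨isYD_empty, rfl⟩]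
    rw [Finset.sum_singleton]
    simp [contentPoch, skewDim, Nat.factorial]
  | succ n ih =>
    rw [Mrec, ih, Nat.factorial_succ, ascPochhammer_succ_right]
    simp only [Polynomial.eval_mul, Polynomial.eval_add, Polynomial.eval_X,
      Polynomial.eval_natCast]
    push_cast
    ring


/-- For every `n ≥ 0` and complex `z, z'`:
`∑_{λ ⊢ n} (z)_λ (z')_λ (dim λ)² / (n!)² = (zz')_n / n!`,
the sum being over all Young diagrams with `n` boxes (all of which fit inside the
`n × n` square). -/
theorem zmeasure_normalization (n : ℕ) (z z' : ℂ) :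
    ∑ s ∈ (Finset.range n ×ˢ Finset.range n).powerset.filter
        (fun s => IsYD s ∧ s.card = n),
      contentPoch z s * contentPoch z' s * ((skewDim s.card ∅ s : ℂ)) ^ 2 /
        ((Nat.factorial n : ℂ)) ^ 2 =
      (ascPochhammer ℂ n).eval (z * z') / (Nat.factorial n : ℂ) := by
  have hcongr : ∀ s ∈ (Finset.range n ×ˢ Finset.range n).powerset.filter
      (fun s => IsYD s ∧ s.card = n),
      contentPoch z s * contentPoch z' s * ((skewDim s.card ∅ s : ℂ)) ^ 2 /
        ((Nat.factorial n : ℂ)) ^ 2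
      = contentPoch z s * contentPoch z' s * ((skewDim n ∅ s : ℂ)) ^ 2 /
        ((Nat.factorial n : ℂ)) ^ 2 := by
    intro s hs
    rw [(mem_Mfilter.1 hs).2]
  rw [Finset.sum_congr rfl hcongr, ← Finset.sum_div, Mval]
  have hfac : (Nat.factorial n : ℂ) ≠ 0 := by
    exact_mod_cast Nat.cast_ne_zero.2 (Nat.factorial_ne_zero n)
  field_simp
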